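/- For nonnegative integers n and a ∈ {0,1}, there is a size-preserving bijection between the set of partitions with at most n parts, and the Cartesian product of (partitions with at most n parts and each part at most n+a) with (partitions each of whose parts lies in the interval [n+a+1, 2n+a]), where size-preserving means |ν| = |λ| + |μ| under ν ↦ (λ, μ). -/

import Mathlib

open Multiset

namespace Stmt11

/-- partitions of `N` with at most `n` parts -/
abbrev TA (n N : ℕ) := {ν : Multiset ℕ // (ν.card ≤ n ∧ ∀ x ∈ ν, 0 < x) ∧ ν.sum = N}
/-- partitions of `N` with at most `n` parts, each at most `m` -/
abbrev TC (n m N : ℕ) := {l : Multiset ℕ // (l.card ≤ n ∧ ∀ x ∈ l, 0 < x ∧ x ≤ m) ∧ l.sum = N}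
/-- partitions of `N` with parts in `(m, m+n]` -/
abbrev TD (n m N : ℕ) := {μ : Multiset ℕ // (∀ x ∈ μ, m < x ∧ x ≤ m + n) ∧ μ.sum = N}

lemma card_le_sum {ν : Multiset ℕ} (h : ∀ x ∈ ν, 0 < x) : ν.card ≤ ν.sum := by
  induction ν using Multiset.induction with
  | empty => simp
  | cons a s ih =>
      simp only [card_cons, sum_cons]
      have ha : 0 < a := h a (mem_cons_self a s)
      have := ih (fun x hx => h x (mem_cons_of_mem hx))
      omega

lemma mem_le_sum {ν : Multiset ℕ} {x : ℕ} (hx : x ∈ ν) : x ≤ ν.sum :=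
  Multiset.single_le_sum (fun _ _ => Nat.zero_le _) x hx

lemma finite_aux (N : ℕ) (P : Multiset ℕ → Prop)
    (h : ∀ ν, P ν → (∀ x ∈ ν, 0 < x) ∧ ν.sum = N) : Finite {ν : Multiset ℕ // P ν} := by
  have : Function.Injective (fun ν : {ν : Multiset ℕ // P ν} =>
      (fun i : Fin (N + 1) => (⟨ν.1.count i.1, by
        have h1 := card_le_sum (h ν.1 ν.2).1
        have h2 := (h ν.1 ν.2).2
        have h3 := Multiset.count_le_card i.1 ν.1
        omega⟩ : Fin (N + 1)))) := by
    intro ⟨ν, hν⟩ ⟨ν', hν'⟩ hh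
    obtain ⟨hpos, hsum⟩ := h ν hν
    obtain ⟨hpos', hsum'⟩ := h ν' hν'
    simp only [Subtype.mk.injEq]
    ext a
    by_cases ha : a ≤ N
    · have := congrFun hh ⟨a, by omega⟩
      simpa [Fin.ext_iff] using this
    · have h1 : a ∉ ν := fun hm => ha (hsum ▸ mem_le_sum hm)
      have h2 : a ∉ ν' := fun hm => ha (hsum' ▸ mem_le_sum hm)
      rw [count_eq_zero_of_notMem h1, count_eq_zero_of_notMem h2]
  exact Finite.of_injective _ this

instance (n N : ℕ) : Finite (TA n N) :=
  finite_aux N _ (fun ν h => ⟨h.1.2, h.2⟩)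

instance (n m N : ℕ) : Finite (TC n m N) :=
  finite_aux N _ (fun ν h => ⟨fun x hx => (h.1.2 x hx).1, h.2⟩)

instance (n m N : ℕ) : Finite (TD n m N) :=
  finite_aux N _ (fun ν h => ⟨fun x hx => Nat.lt_of_le_of_lt (Nat.zero_le _) (h.1 x hx).1, h.2⟩)



/-- remove one box from each part (and drop empty parts) -/
def down (ν : Multiset ℕ) : Multiset ℕ := (ν.map Nat.pred).filter (· ≠ 0)

/-- add one box to each part and pad with parts equal to 1 up to `n` parts -/
def up (n : ℕ) (ν : Multiset ℕ) : Multiset ℕ := ν.map Nat.succ + replicate (n - ν.card) 1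

lemma count_map_pred (ν : Multiset ℕ) (k : ℕ) (hk : k ≠ 0) :
    count k (ν.map Nat.pred) = count (k + 1) ν := by
  induction ν using Multiset.induction with
  | empty => simp
  | cons a s ih =>
      simp only [map_cons, count_cons, ih]
      have h : (k = a - 1) ↔ (k + 1 = a) := by omega
      simp [Nat.pred_eq_sub_one, h]

lemma count_zero_map_pred (ν : Multiset ℕ) (hpos : ∀ x ∈ ν, 0 < x) :
    count 0 (ν.map Nat.pred) = count 1 ν := by
  induction ν using Multiset.induction with
  | empty => simp
  | cons a s ih =>
      have ha := hpos a (mem_cons_self a s)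
      have ih' := ih (fun x hx => hpos x (mem_cons_of_mem hx))
      simp only [map_cons, count_cons, ih']
      have h : (0 = a - 1) ↔ (1 = a) := by omega
      simp [Nat.pred_eq_sub_one, h]



lemma count_down (ν : Multiset ℕ) (k : ℕ) (hk : k ≠ 0) :
    count k (down ν) = count (k + 1) ν := by
  rw [down, count_filter, if_pos hk, count_map_pred ν k hk]

lemma count_down_zero (ν : Multiset ℕ) : count 0 (down ν) = 0 := by
  simp [down, count_filter]

lemma sum_filter_ne_zero (s : Multiset ℕ) : (s.filter (· ≠ 0)).sum = s.sum := by
  conv_rhs => rw [← Multiset.filter_add_not (· ≠ 0) s]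
  rw [Multiset.sum_add]
  have : ∀ x ∈ s.filter (fun a => ¬ a ≠ 0), x = 0 := by
    intro x hx
    have := (Multiset.mem_filter.mp hx).2
    omega
  rw [Multiset.sum_eq_zero this, add_zero]

lemma sum_map_pred (ν : Multiset ℕ) (hpos : ∀ x ∈ ν, 0 < x) :
    (ν.map Nat.pred).sum + ν.card = ν.sum := by
  induction ν using Multiset.induction with
  | empty => simp
  | cons a s ih =>
      have ha := hpos a (mem_cons_self a s)
      have ih' := ih (fun x hx => hpos x (mem_cons_of_mem hx))
      simp only [map_cons, sum_cons, card_cons, Nat.pred_eq_sub_one]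
      simp only [Nat.pred_eq_sub_one] at ih'
      omega

lemma sum_down (ν : Multiset ℕ) (hpos : ∀ x ∈ ν, 0 < x) :
    (down ν).sum + ν.card = ν.sum := by
  rw [down, sum_filter_ne_zero, sum_map_pred ν hpos]

lemma card_down (ν : Multiset ℕ) (hpos : ∀ x ∈ ν, 0 < x) :
    (down ν).card + count 1 ν = ν.card := by
  have h1 : (down ν).card + ((ν.map Nat.pred).filter (fun a => ¬ a ≠ 0)).card
      = (ν.map Nat.pred).card := by
    rw [down, ← Multiset.card_add, Multiset.filter_add_not]
  have h2 : (ν.map Nat.pred).filter (fun a => ¬ a ≠ 0) = (ν.map Nat.pred).filter (0 = ·) := by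
    apply Multiset.filter_congr
    intro x _
    constructor <;> intro <;> omega
  have h3 : ((ν.map Nat.pred).filter (0 = ·)).card = count 0 (ν.map Nat.pred) := by
    rw [Multiset.count]
    rw [Multiset.countP_eq_card_filter]
  rw [h2, h3, count_zero_map_pred ν hpos] at h1
  rw [Multiset.card_map] at h1
  exact h1

lemma count_up (n : ℕ) (μ : Multiset ℕ) (k : ℕ) :
    count k (up n μ) = (if k = 0 then 0 else if k = 1 then count 0 μ + (n - μ.card)
      else count (k - 1) μ) := by
  rw [up, Multiset.count_add, count_replicate]
  rcases k with _ | j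
  · simp [Multiset.count_eq_zero]
  · have h1 : count (j + 1) (μ.map Nat.succ) = count j μ :=
      Multiset.count_map_eq_count' Nat.succ μ Nat.succ_injective j
    rcases j with _ | i
    · simp [h1]
    · simp only [h1]
      have : ¬ (1 = i + 1 + 1) := by omega
      simp [this]

lemma mem_up_pos (n : ℕ) (μ : Multiset ℕ) (x : ℕ) (hx : x ∈ up n μ) : 0 < x := by
  rw [up, Multiset.mem_add] at hx
  rcases hx with h | h
  · obtain ⟨a, _, rfl⟩ := Multiset.mem_map.mp h
    exact Nat.succ_pos a
  · rw [Multiset.eq_of_mem_replicate h]; omega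

lemma card_up (n : ℕ) (μ : Multiset ℕ) (h : μ.card ≤ n) : (up n μ).card = n := by
  rw [up, Multiset.card_add, Multiset.card_map, Multiset.card_replicate]
  omega

lemma sum_map_succ (μ : Multiset ℕ) : (μ.map Nat.succ).sum = μ.sum + μ.card := by
  induction μ using Multiset.induction with
  | empty => simp
  | cons a s ih => simp [ih]; omega

lemma sum_up (n : ℕ) (μ : Multiset ℕ) (h : μ.card ≤ n) : (up n μ).sum = μ.sum + n := by
  rw [up, Multiset.sum_add, sum_map_succ, Multiset.sum_replicate, smul_eq_mul, mul_one]
  omega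

lemma up_down (n : ℕ) (ν : Multiset ℕ) (hpos : ∀ x ∈ ν, 0 < x) (hcard : ν.card = n) :
    up n (down ν) = ν := by
  ext k
  rw [count_up]
  split_ifs with h0 h1
  · subst h0
    symm
    rw [Multiset.count_eq_zero]
    intro h
    exact absurd (hpos 0 h) (lt_irrefl 0)
  · subst h1
    rw [count_down_zero]
    have hc := card_down ν hpos
    have hc1 := Multiset.count_le_card 1 ν
    omega
  · have hk1 : k - 1 ≠ 0 := by omega
    rw [count_down ν (k-1) hk1]
    congr 1
    omega

lemma down_up (n : ℕ) (μ : Multiset ℕ) (hpos : ∀ x ∈ μ, 0 < x) :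
    down (up n μ) = μ := by
  ext k
  by_cases hk : k = 0
  · subst hk
    rw [count_down_zero]
    symm
    rw [Multiset.count_eq_zero]
    intro h
    exact absurd (hpos 0 h) (lt_irrefl 0)
  · rw [count_down _ k hk, count_up]
    have hz : count 0 μ = 0 := by
      rw [Multiset.count_eq_zero]
      intro h
      exact absurd (hpos 0 h) (lt_irrefl 0)
    rw [if_neg (by omega : ¬ (k + 1 = 0)), if_neg (by omega : ¬ (k + 1 = 1))]
    simp


lemma down_pos {ν : Multiset ℕ} {x : ℕ} (hx : x ∈ down ν) : 0 < x := by
  rw [down] at hx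
  have := (Multiset.mem_filter.mp hx).2
  omega

abbrev TA2 (n N : ℕ) := {ν : Multiset ℕ // (ν.card ≤ n + 1 ∧ ∀ x ∈ ν, 0 < x) ∧ ν.sum + (n+1) = N}

def equivA (n N : ℕ) : TA (n+1) N ≃ (TA n N ⊕ TA2 n N) where
  toFun ν :=
    if h : ν.1.card ≤ n then Sum.inl ⟨ν.1, ⟨⟨h, ν.2.1.2⟩, ν.2.2⟩⟩
    else Sum.inr ⟨down ν.1, by
      have hpos := ν.2.1.2
      have hcard : ν.1.card = n + 1 := by have := ν.2.1.1; omega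
      refine ⟨⟨?_, fun x hx => down_pos hx⟩, ?_⟩
      · have := card_down ν.1 hpos
        omega
      · have := sum_down ν.1 hpos
        have hs := ν.2.2
        omega⟩
  invFun x :=
    Sum.elim (fun y => ⟨y.1, ⟨⟨Nat.le_succ_of_le y.2.1.1, y.2.1.2⟩, y.2.2⟩⟩)
      (fun y => ⟨up (n+1) y.1, by
        have hc : y.1.card ≤ n + 1 := y.2.1.1
        refine ⟨⟨le_of_eq (card_up (n+1) y.1 hc), fun x hx => mem_up_pos _ _ x hx⟩, ?_⟩
        rw [sum_up (n+1) y.1 hc]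
        exact y.2.2⟩) x
  left_inv ν := by
    dsimp only
    by_cases h : ν.1.card ≤ n
    · rw [dif_pos h]
      rfl
    · rw [dif_neg h]
      simp only [Sum.elim_inr]
      apply Subtype.ext
      exact up_down (n+1) ν.1 ν.2.1.2 (by have := ν.2.1.1; omega)
  right_inv x := by
    dsimp only
    rcases x with y | y
    · simp only [Sum.elim_inl]
      exact dif_pos y.2.1.1
    · simp only [Sum.elim_inr]
      have hc : y.1.card ≤ n + 1 := y.2.1.1
      exact (dif_neg (show ¬ (up (n+1) y.1).card ≤ n by rw [card_up (n+1) y.1 hc]; omega)).trans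
        (congrArg Sum.inr (Subtype.ext (down_up (n+1) y.1 y.2.1.2)))

abbrev TC2 (n m N : ℕ) := {l : Multiset ℕ // (l.card ≤ n ∧ ∀ x ∈ l, 0 < x ∧ x ≤ m + 1) ∧ l.sum + (m+1) = N}

lemma sum_of_erase {l : Multiset ℕ} {a : ℕ} (h : a ∈ l) : a + (l.erase a).sum = l.sum := by
  rw [← Multiset.sum_cons, Multiset.cons_erase h]

lemma card_of_erase {l : Multiset ℕ} {a : ℕ} (h : a ∈ l) : (l.erase a).card + 1 = l.card := by
  rw [← Multiset.card_cons, Multiset.cons_erase h]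

def equivC (n m N : ℕ) : TC (n+1) (m+1) N ≃ (TC (n+1) m N ⊕ TC2 n m N) where
  toFun l :=
    if h : (m+1) ∈ l.1 then
      Sum.inr ⟨l.1.erase (m+1), by
        have hc := card_of_erase h
        have hs := sum_of_erase h
        have hb := l.2.1.2
        have hcard := l.2.1.1
        have hsum := l.2.2
        exact ⟨⟨by omega, fun x hx => hb x (Multiset.mem_of_mem_erase hx)⟩, by omega⟩⟩
    else
      Sum.inl ⟨l.1, by
        refine ⟨⟨l.2.1.1, fun x hx => ?_⟩, l.2.2⟩
        have := l.2.1.2 x hx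
        have hxne : x ≠ m + 1 := fun he => h (he ▸ hx)
        omega⟩
  invFun x :=
    Sum.elim
      (fun y => ⟨y.1, ⟨⟨y.2.1.1, fun x hx => by have := y.2.1.2 x hx; omega⟩, y.2.2⟩⟩)
      (fun y => ⟨(m+1) ::ₘ y.1, by
        refine ⟨⟨?_, fun x hx => ?_⟩, ?_⟩
        · rw [Multiset.card_cons]
          have := y.2.1.1
          omega
        · rcases Multiset.mem_cons.mp hx with rfl | hx'
          · omega
          · exact y.2.1.2 x hx'
        · rw [Multiset.sum_cons]
          have := y.2.2
          omega⟩) x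
  left_inv l := by
    dsimp only
    by_cases h : (m+1) ∈ l.1
    · rw [dif_pos h]
      simp only [Sum.elim_inr]
      exact Subtype.ext (Multiset.cons_erase h)
    · rw [dif_neg h]
      rfl
  right_inv x := by
    dsimp only
    rcases x with y | y
    · simp only [Sum.elim_inl]
      refine dif_neg ?_
      intro hmem
      have := y.2.1.2 _ hmem
      omega
    · simp only [Sum.elim_inr]
      exact (dif_pos (by simp)).trans
        (congrArg Sum.inr (Subtype.ext (Multiset.erase_cons_head _ _)))

abbrev TD2 (n m N : ℕ) := {μ : Multiset ℕ // (∀ x ∈ μ, m < x ∧ x ≤ m + (n+1)) ∧ μ.sum + (m+1) = N}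

def equivD (n m N : ℕ) : TD (n+1) m N ≃ (TD n (m+1) N ⊕ TD2 n m N) where
  toFun μ :=
    if h : (m+1) ∈ μ.1 then
      Sum.inr ⟨μ.1.erase (m+1), by
        have hs := sum_of_erase h
        have hb := μ.2.1
        have hsum := μ.2.2
        exact ⟨fun x hx => hb x (Multiset.mem_of_mem_erase hx), by omega⟩⟩
    else
      Sum.inl ⟨μ.1, by
        refine ⟨fun x hx => ?_, μ.2.2⟩
        have := μ.2.1 x hx
        have hxne : x ≠ m + 1 := fun he => h (he ▸ hx)
        omega⟩
  invFun x :=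
    Sum.elim
      (fun y => ⟨y.1, ⟨fun x hx => by have := y.2.1 x hx; omega, y.2.2⟩⟩)
      (fun y => ⟨(m+1) ::ₘ y.1, by
        refine ⟨fun x hx => ?_, ?_⟩
        · rcases Multiset.mem_cons.mp hx with rfl | hx'
          · omega
          · exact y.2.1 x hx'
        · rw [Multiset.sum_cons]
          have := y.2.2
          omega⟩) x
  left_inv μ := by
    dsimp only
    by_cases h : (m+1) ∈ μ.1
    · rw [dif_pos h]
      simp only [Sum.elim_inr]
      exact Subtype.ext (Multiset.cons_erase h)
    · rw [dif_neg h]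
      rfl
  right_inv x := by
    dsimp only
    rcases x with y | y
    · simp only [Sum.elim_inl]
      refine dif_neg ?_
      intro hmem
      have := y.2.1 _ hmem
      omega
    · simp only [Sum.elim_inr]
      exact (dif_pos (by simp)).trans
        (congrArg Sum.inr (Subtype.ext (Multiset.erase_cons_head _ _)))

instance (n N : ℕ) : Finite (TA2 n N) :=
  finite_aux (N - (n+1)) _ (fun ν h => ⟨h.1.2, by have := h.2; omega⟩)

instance (n m N : ℕ) : Finite (TC2 n m N) :=
  finite_aux (N - (m+1)) _ (fun ν h => ⟨fun x hx => (h.1.2 x hx).1, by have := h.2; omega⟩)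

instance (n m N : ℕ) : Finite (TD2 n m N) :=
  finite_aux (N - (m+1)) _
    (fun ν h => ⟨fun x hx => Nat.lt_of_le_of_lt (Nat.zero_le _) (h.1 x hx).1, by have := h.2; omega⟩)

noncomputable def cA (n N : ℕ) : ℕ := Nat.card (TA n N)
noncomputable def cC (n m N : ℕ) : ℕ := Nat.card (TC n m N)
noncomputable def cD (n m N : ℕ) : ℕ := Nat.card (TD n m N)

lemma shift_card (P : Multiset ℕ → Prop) (k N : ℕ) :
    Nat.card {ν : Multiset ℕ // P ν ∧ ν.sum + k = N} =
      if k ≤ N then Nat.card {ν : Multiset ℕ // P ν ∧ ν.sum = N - k} else 0 := by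
  by_cases h : k ≤ N
  · rw [if_pos h]
    exact Nat.card_congr (Equiv.subtypeEquivRight (fun ν => by
      constructor
      · rintro ⟨h1, h2⟩; exact ⟨h1, by omega⟩
      · rintro ⟨h1, h2⟩; exact ⟨h1, by omega⟩))
  · rw [if_neg h]
    have : IsEmpty {ν : Multiset ℕ // P ν ∧ ν.sum + k = N} := ⟨fun a => by
      have := a.2.2; omega⟩
    exact Nat.card_of_isEmpty

lemma cA_rec (n N : ℕ) :
    cA (n+1) N = cA n N + (if n+1 ≤ N then cA (n+1) (N - (n+1)) else 0) := by
  rw [cA, Nat.card_congr (equivA n N), Nat.card_sum]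
  congr 1
  exact shift_card _ (n+1) N

lemma cC_rec (n m N : ℕ) :
    cC (n+1) (m+1) N = cC (n+1) m N + (if m+1 ≤ N then cC n (m+1) (N - (m+1)) else 0) := by
  rw [cC, Nat.card_congr (equivC n m N), Nat.card_sum]
  congr 1
  exact shift_card _ (m+1) N

lemma cD_rec (n m N : ℕ) :
    cD (n+1) m N = cD n (m+1) N + (if m+1 ≤ N then cD (n+1) m (N - (m+1)) else 0) := by
  rw [cD, Nat.card_congr (equivD n m N), Nat.card_sum]
  congr 1
  exact shift_card _ (m+1) N

lemma card_if_zero {P : Multiset ℕ → Prop} (N : ℕ) (h0 : P 0)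
    (huniq : ∀ ν, P ν → ν = 0) :
    Nat.card {ν : Multiset ℕ // P ν ∧ ν.sum = N} = if N = 0 then 1 else 0 := by
  by_cases hN : N = 0
  · subst hN
    rw [if_pos rfl]
    have : Nonempty {ν : Multiset ℕ // P ν ∧ ν.sum = 0} := ⟨⟨0, h0, rfl⟩⟩
    have : Subsingleton {ν : Multiset ℕ // P ν ∧ ν.sum = 0} := ⟨fun a b => by
      apply Subtype.ext
      rw [huniq a.1 a.2.1, huniq b.1 b.2.1]⟩
    exact Nat.card_unique
  · rw [if_neg hN]
    have : IsEmpty {ν : Multiset ℕ // P ν ∧ ν.sum = N} := ⟨fun a => by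
      apply hN
      rw [← a.2.2, huniq a.1 a.2.1]
      rfl⟩
    exact Nat.card_of_isEmpty

lemma cA_zero (N : ℕ) : cA 0 N = if N = 0 then 1 else 0 := by
  apply card_if_zero
  · exact ⟨le_rfl, by simp⟩
  · intro ν h
    exact Multiset.card_eq_zero.mp (Nat.le_zero.mp h.1)

lemma cC_zero_left (m N : ℕ) : cC 0 m N = if N = 0 then 1 else 0 := by
  apply card_if_zero
  · exact ⟨le_rfl, by simp⟩
  · intro ν h
    exact Multiset.card_eq_zero.mp (Nat.le_zero.mp h.1)

lemma cC_zero_right (n N : ℕ) : cC n 0 N = if N = 0 then 1 else 0 := by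
  apply card_if_zero
  · exact ⟨Nat.zero_le _, by simp⟩
  · intro ν h
    exact Multiset.eq_zero_of_forall_notMem (fun x hx => by have := h.2 x hx; omega)

lemma cD_zero (m N : ℕ) : cD 0 m N = if N = 0 then 1 else 0 := by
  apply card_if_zero
  · exact fun x hx => absurd hx (Multiset.notMem_zero x)
  · intro ν h
    exact Multiset.eq_zero_of_forall_notMem (fun x hx => by have := h x hx; omega)

open PowerSeries

noncomputable def Fa (n : ℕ) : PowerSeries ℚ := PowerSeries.mk fun N => (cA n N : ℚ)
noncomputable def Pc (n m : ℕ) : PowerSeries ℚ := PowerSeries.mk fun N => (cC n m N : ℚ)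
noncomputable def Gd (n m : ℕ) : PowerSeries ℚ := PowerSeries.mk fun N => (cD n m N : ℚ)

lemma Fa_zero : Fa 0 = 1 := by
  ext N
  rw [Fa, coeff_mk, coeff_one, cA_zero]
  split_ifs <;> norm_num

lemma Pc_zero_left (m : ℕ) : Pc 0 m = 1 := by
  ext N
  rw [Pc, coeff_mk, coeff_one, cC_zero_left]
  split_ifs <;> norm_num

lemma Pc_zero_right (n : ℕ) : Pc n 0 = 1 := by
  ext N
  rw [Pc, coeff_mk, coeff_one, cC_zero_right]
  split_ifs <;> norm_num

lemma Gd_zero (m : ℕ) : Gd 0 m = 1 := by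
  ext N
  rw [Gd, coeff_mk, coeff_one, cD_zero]
  split_ifs <;> norm_num

lemma Fa_rec (n : ℕ) : Fa (n+1) * (1 - X^(n+1)) = Fa n := by
  ext N
  rw [mul_sub, mul_one, map_sub, coeff_mul_X_pow']
  simp only [Fa, coeff_mk]
  rw [cA_rec n N]
  split_ifs <;> push_cast <;> ring

lemma Gd_rec (n m : ℕ) : Gd (n+1) m * (1 - X^(m+1)) = Gd n (m+1) := by
  ext N
  rw [mul_sub, mul_one, map_sub, coeff_mul_X_pow']
  simp only [Gd, coeff_mk]
  rw [cD_rec n m N]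
  split_ifs <;> push_cast <;> ring

lemma Pc_rec (n m : ℕ) : Pc (n+1) (m+1) = Pc (n+1) m + X^(m+1) * Pc n (m+1) := by
  ext N
  rw [_root_.map_add, mul_comm (X^(m+1)) _, coeff_mul_X_pow']
  simp only [Pc, coeff_mk]
  rw [cC_rec n m N]
  split_ifs <;> push_cast <;> ring

lemma geomC_row (m : ℕ) : Pc 1 m * (1 - X) = 1 - X^(m+1) := by
  induction m with
  | zero => rw [Pc_zero_right]; ring
  | succ m ih =>
      rw [Pc_rec 0 m, Pc_zero_left, add_mul, ih, mul_one]
      ring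

lemma geomC_col (n : ℕ) : Pc n 1 * (1 - X) = 1 - X^(n+1) := by
  induction n with
  | zero => rw [Pc_zero_left]; ring
  | succ n ih =>
      have h := Pc_rec n 0
      rw [Pc_zero_right] at h
      norm_num at h
      rw [h]
      have e : (1 + X * Pc n 1) * (1 - X) = 1 - X + X * (Pc n 1 * (1 - X)) := by ring
      rw [e, ih]
      ring

lemma W (n m : ℕ) : Pc n (m+1) * (1 - X^(m+1)) = Pc (n+1) m * (1 - X^(n+1)) := by
  induction n generalizing m with
  | zero =>
      rw [Pc_zero_left, one_mul, pow_one, geomC_row]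
  | succ n ihn =>
      induction m with
      | zero =>
          rw [Pc_zero_right, one_mul, pow_one, geomC_col]
      | succ m ihm =>
          have hL : Pc (n+1) (m+2) = Pc (n+1) (m+1) + X^(m+2) * Pc n (m+2) := Pc_rec n (m+1)
          have hR : Pc (n+2) (m+1) = Pc (n+2) m + X^(m+1) * Pc (n+1) (m+1) := Pc_rec (n+1) m
          have hOut : Pc n (m+2) * (1 - X^(m+2)) = Pc (n+1) (m+1) * (1 - X^(n+1)) := ihn (m+1)
          have hIn : Pc (n+1) (m+1) * (1 - X^(m+1)) = Pc (n+2) m * (1 - X^(n+2)) := ihm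
          rw [hL, hR]
          have e1 : (Pc (n+1) (m+1) + X^(m+2) * Pc n (m+2)) * (1 - X^(m+2))
              = Pc (n+1) (m+1) * (1 - X^(m+2)) + X^(m+2) * (Pc n (m+2) * (1 - X^(m+2))) := by
            ring
          rw [e1, hOut]
          have e2 : (Pc (n+2) m + X^(m+1) * Pc (n+1) (m+1)) * (1 - X^(n+2))
              = Pc (n+2) m * (1 - X^(n+2)) + X^(m+1) * (Pc (n+1) (m+1) * (1 - X^(n+2))) := by
            ring
          rw [e2, ← hIn]
          ring

lemma one_sub_X_pow_ne_zero (k : ℕ) : (1 - X^(k+1) : PowerSeries ℚ) ≠ 0 := by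
  intro h
  have := congrArg (PowerSeries.constantCoeff) h
  rw [map_sub, map_one, map_pow, constantCoeff_X] at this
  simp at this

lemma mainSeries (n : ℕ) : ∀ m, Fa n = Pc n m * Gd n m := by
  induction n with
  | zero =>
      intro m
      rw [Fa_zero, Pc_zero_left, Gd_zero, one_mul]
  | succ n ih =>
      intro m
      apply mul_right_cancel₀ (one_sub_X_pow_ne_zero n)
      rw [Fa_rec n, ih (m+1), ← Gd_rec n m]
      calc Pc n (m+1) * (Gd (n+1) m * (1 - X^(m+1)))
          = (Pc n (m+1) * (1 - X^(m+1))) * Gd (n+1) m := by ring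
        _ = (Pc (n+1) m * (1 - X^(n+1))) * Gd (n+1) m := by rw [W n m]
        _ = Pc (n+1) m * Gd (n+1) m * (1 - X^(n+1)) := by ring

lemma count_identity (n m N : ℕ) :
    cA n N = ∑ p ∈ Finset.HasAntidiagonal.antidiagonal N, cC n m p.1 * cD n m p.2 := by
  have h := congrArg (PowerSeries.coeff N) (mainSeries n m)
  rw [coeff_mul] at h
  simp only [Fa, Pc, Gd, coeff_mk] at h
  have : ((cA n N : ℚ)) = ((∑ p ∈ Finset.HasAntidiagonal.antidiagonal N, cC n m p.1 * cD n m p.2 : ℕ) : ℚ) := by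
    rw [h]
    push_cast
    rfl
  exact_mod_cast this

abbrev TCfull (n m : ℕ) := {l : Multiset ℕ // l.card ≤ n ∧ ∀ x ∈ l, 0 < x ∧ x ≤ m}
abbrev TDfull (n m : ℕ) := {μ : Multiset ℕ // ∀ x ∈ μ, m < x ∧ x ≤ m + n}
abbrev TL (n : ℕ) := {ν : Multiset ℕ // ν.card ≤ n ∧ ∀ x ∈ ν, 0 < x}

def wR (n m : ℕ) : TCfull n m × TDfull n m → ℕ := fun p => p.1.1.sum + p.2.1.sum
def wL (n : ℕ) : TL n → ℕ := fun x => x.1.sum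

def equivTP (n m N : ℕ) :
    {p : TCfull n m × TDfull n m // wR n m p = N} ≃
      Σ q : Finset.HasAntidiagonal.antidiagonal N, TC n m q.1.1 × TD n m q.1.2 where
  toFun p := ⟨⟨(p.1.1.1.sum, p.1.2.1.sum), Finset.HasAntidiagonal.mem_antidiagonal.mpr p.2⟩,
    ⟨⟨p.1.1.1, p.1.1.2, rfl⟩, ⟨p.1.2.1, p.1.2.2, rfl⟩⟩⟩
  invFun x := ⟨(⟨x.2.1.1, x.2.1.2.1⟩, ⟨x.2.2.1, x.2.2.2.1⟩), by
    have h1 := x.2.1.2.2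
    have h2 := x.2.2.2.2
    have h3 := Finset.HasAntidiagonal.mem_antidiagonal.mp x.1.2
    simp only [wR]
    rw [h1, h2]
    exact h3⟩
  left_inv p := rfl
  right_inv x := by
    rcases x with ⟨⟨⟨j, k⟩, hq⟩, ⟨⟨l, hl1, hl2⟩, ⟨d, hd1, hd2⟩⟩⟩
    dsimp only at hl2 hd2 ⊢
    subst hl2
    subst hd2
    rfl

lemma natCard_sigma {ι : Type*} (s : Finset ι) (f : ι → Type*) [∀ i, Finite (f i)] :
    Nat.card (Σ i : s, f i) = ∑ i ∈ s, Nat.card (f i) := by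
  classical
  letI : ∀ i : s, Fintype (f i) := fun i => Fintype.ofFinite _
  rw [Nat.card_eq_fintype_card, Fintype.card_sigma, ← Finset.sum_coe_sort s (fun i => Nat.card (f i))]
  congr 1
  ext i
  rw [Nat.card_eq_fintype_card]

lemma card_fiberR (n m N : ℕ) :
    Nat.card {p : TCfull n m × TDfull n m // wR n m p = N}
      = ∑ q ∈ Finset.HasAntidiagonal.antidiagonal N, cC n m q.1 * cD n m q.2 := by
  rw [Nat.card_congr (equivTP n m N)]
  rw [natCard_sigma (Finset.HasAntidiagonal.antidiagonal N) (fun q => TC n m q.1 × TD n m q.2)]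
  congr 1
  ext q
  rw [Nat.card_prod]
  rfl

def equivFiberL (n N : ℕ) : {x : TL n // wL n x = N} ≃ TA n N where
  toFun x := ⟨x.1.1, ⟨x.1.2, x.2⟩⟩
  invFun y := ⟨⟨y.1, y.2.1⟩, y.2.2⟩
  left_inv x := rfl
  right_inv y := rfl

lemma card_fiber_eq (n m N : ℕ) :
    Nat.card {x : TL n // wL n x = N}
      = Nat.card {p : TCfull n m × TDfull n m // wR n m p = N} := by
  rw [Nat.card_congr (equivFiberL n N), card_fiberR, ← count_identity n m N]
  rfl

instance (n N : ℕ) : Finite {x : TL n // wL n x = N} :=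
  Finite.of_equiv _ (equivFiberL n N).symm

instance (n m N : ℕ) : Finite {p : TCfull n m × TDfull n m // wR n m p = N} :=
  Finite.of_equiv _ (equivTP n m N).symm

noncomputable def bigEquiv (n m : ℕ) : TL n ≃ TCfull n m × TDfull n m :=
  (Equiv.sigmaFiberEquiv (wL n)).symm.trans
    ((Equiv.sigmaCongrRight (fun N => (Finite.card_eq.mp (card_fiber_eq n m N)).some)).trans
      (Equiv.sigmaFiberEquiv (wR n m)))

lemma bigEquiv_sum (n m : ℕ) (x : TL n) : wR n m (bigEquiv n m x) = wL n x :=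
  ((Finite.card_eq.mp (card_fiber_eq n m (wL n x))).some ⟨x, rfl⟩).2

end Stmt11

/-- For `a ∈ {0,1}`, there is a size-preserving bijection between the partitions
with at most `n` parts and the product of (partitions with at most `n` parts, each
part at most `n + a`) with (partitions all of whose parts lie in `[n+a+1, 2n+a]`),
partitions being encoded as multisets of positive integers. -/
theorem stmt11 (n a : ℕ) (ha : a ≤ 1) :
    ∃ e : {ν : Multiset ℕ // ν.card ≤ n ∧ ∀ x ∈ ν, 0 < x} ≃
        {lam : Multiset ℕ // lam.card ≤ n ∧ ∀ x ∈ lam, 0 < x ∧ x ≤ n + a} ×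
          {μ : Multiset ℕ // ∀ x ∈ μ, n + a < x ∧ x ≤ 2 * n + a},
      ∀ ν, ν.1.sum = ((e ν).1).1.sum + ((e ν).2).1.sum := by
  have hiff : ∀ μ : Multiset ℕ,
      (∀ x ∈ μ, n + a < x ∧ x ≤ (n + a) + n) ↔ (∀ x ∈ μ, n + a < x ∧ x ≤ 2 * n + a) := by
    intro μ
    constructor <;> intro h x hx <;> obtain ⟨h1, h2⟩ := h x hx <;> exact ⟨h1, by omega⟩
  refine ⟨(Stmt11.bigEquiv n (n + a)).trans
    (Equiv.prodCongr (Equiv.refl _) (Equiv.subtypeEquivRight hiff)), fun ν => ?_⟩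
  have h := Stmt11.bigEquiv_sum n (n + a) ν
  exact h.symm
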